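/- Let H be an intersecting k-uniform hypergraph with maximum degree at most Δ, and suppose H has a kernel A of size at most K. Then the number of non-isolated vertices of H is at most (1/4)k²Δ + K. -/
import Mathlib


/-- An intersecting k-uniform hypergraph with maximum degree at most Δ and
a kernel of size at most K has order at most (1/4)k²Δ + K. -/
theorem order_le_of_intersecting_with_kernel {V : Type*} [Fintype V] [DecidableEq V]
    (k Δ K : ℕ) (H : Finset (Finset V)) (A : Finset V)
    (hunif : ∀ e ∈ H, e.card = k)
    (hint : ∀ e ∈ H, ∀ f ∈ H, e ≠ f → (e ∩ f).Nonempty)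
    (hdeg : ∀ v : V, (H.filter (fun e => v ∈ e)).card ≤ Δ)
    (hker1 : ∀ e ∈ H, (e ∩ A).Nonempty)
    (hker2 : ∀ e ∈ H, ∀ f ∈ H, e ≠ f → ((e ∩ A) ∩ (f ∩ A)).Nonempty)
    (hK : A.card ≤ K) :
    ((H.biUnion id).card : ℝ) ≤ (1 / 4 : ℝ) * k ^ 2 * Δ + K := by
  rcases H.eq_empty_or_nonempty with hH | hH
  · subst hH
    simp
    positivity
  obtain ⟨e₀, he₀, hmin⟩ := H.exists_min_image (fun e => (e ∩ A).card) hH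
  set ℓ := (e₀ ∩ A).card with hℓ
  have hℓk : ℓ ≤ k := by
    have := Finset.card_le_card (Finset.inter_subset_left : e₀ ∩ A ⊆ e₀)
    rwa [hunif e₀ he₀] at this
  -- |H| ≤ ℓ * Δ
  have hHsub : H ⊆ (e₀ ∩ A).biUnion (fun v => H.filter (fun e => v ∈ e)) := by
    intro f hf
    rcases eq_or_ne e₀ f with rfl | hne
    · obtain ⟨v, hv⟩ := hker1 e₀ hf
      exact Finset.mem_biUnion.2 ⟨v, hv, Finset.mem_filter.2 ⟨hf, (Finset.mem_inter.1 hv).1⟩⟩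
    · obtain ⟨v, hv⟩ := hker2 e₀ he₀ f hf hne
      simp only [Finset.mem_inter] at hv
      exact Finset.mem_biUnion.2 ⟨v, Finset.mem_inter.2 ⟨hv.1.1, hv.1.2⟩,
        Finset.mem_filter.2 ⟨hf, hv.2.1⟩⟩
  have hHcard : H.card ≤ ℓ * Δ := by
    calc H.card ≤ ((e₀ ∩ A).biUnion (fun v => H.filter (fun e => v ∈ e))).card :=
          Finset.card_le_card hHsub
      _ ≤ ∑ v ∈ e₀ ∩ A, (H.filter (fun e => v ∈ e)).card := Finset.card_biUnion_le
      _ ≤ ∑ v ∈ e₀ ∩ A, Δ := Finset.sum_le_sum (fun v _ => hdeg v)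
      _ = ℓ * Δ := by rw [Finset.sum_const, smul_eq_mul]
  have hsub2 : H.biUnion id ⊆ A ∪ H.biUnion (fun e => e \ A) := by
    intro v hv
    obtain ⟨e, he, hve⟩ := Finset.mem_biUnion.1 hv
    by_cases hvA : v ∈ A
    · exact Finset.mem_union_left _ hvA
    · exact Finset.mem_union_right _
        (Finset.mem_biUnion.2 ⟨e, he, Finset.mem_sdiff.2 ⟨hve, hvA⟩⟩)
  have hout : ∀ e ∈ H, (e \ A).card ≤ k - ℓ := by
    intro e he
    have h1 : (e \ A).card = e.card - (e ∩ A).card := by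
      rw [← Finset.sdiff_inter_self_left]
      exact Finset.card_sdiff_of_subset Finset.inter_subset_left
    rw [h1, hunif e he]
    exact Nat.sub_le_sub_left (hmin e he) k
  have hcard2 : (H.biUnion id).card ≤ K + H.card * (k - ℓ) := by
    calc (H.biUnion id).card ≤ (A ∪ H.biUnion (fun e => e \ A)).card :=
          Finset.card_le_card hsub2
      _ ≤ A.card + (H.biUnion (fun e => e \ A)).card := Finset.card_union_le _ _
      _ ≤ K + ∑ e ∈ H, (e \ A).card := by
          gcongr
          exact Finset.card_biUnion_le
      _ ≤ K + ∑ e ∈ H, (k - ℓ) := by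
          gcongr with e he
          exact hout e he
      _ = K + H.card * (k - ℓ) := by rw [Finset.sum_const, smul_eq_mul]
  have htot : (H.biUnion id).card ≤ K + ℓ * Δ * (k - ℓ) := by
    calc (H.biUnion id).card ≤ K + H.card * (k - ℓ) := hcard2
      _ ≤ K + ℓ * Δ * (k - ℓ) := by gcongr
  have hcast : ((k - ℓ : ℕ) : ℝ) = (k : ℝ) - ℓ := by
    exact Nat.cast_sub hℓk
  have := (Nat.cast_le (α := ℝ)).2 htot
  push_cast at this
  rw [hcast] at this
  have hℓkR : (ℓ : ℝ) ≤ k := by exact_mod_cast hℓk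
  nlinarith [sq_nonneg ((k : ℝ) - 2 * ℓ), Nat.cast_nonneg (α := ℝ) Δ,
    Nat.cast_nonneg (α := ℝ) ℓ, Nat.cast_nonneg (α := ℝ) K]
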